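/- Corollary 6.1: let m ≥ 2 and let n be the least natural number (n ≥ 1) with G(n, m) = 0. Then n = 2·n₁ for some n₁ ≥ 2, and for every k with n₁ ≤ k < n one has G(k, m) = n − k. -/

import Mathlib

/-- `hsub b u m` substitutes the value `u` for the base `b` throughout the
hereditary base-`b` representation of `m` (with `hsub b u 0 = 0`). -/
def hsub (b u : ℕ) (m : ℕ) : ℕ :=
  if m = 0 then 0
  else
    u ^ hsub b u (Nat.log b m) * (m / b ^ Nat.log b m) + hsub b u (m % b ^ Nat.log b m)
termination_by m
decreasing_by
  · exact Nat.log_lt_self b (by assumption)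
  · have hpos : 0 < b ^ Nat.log b m := by
      rcases Nat.eq_zero_or_pos b with hb | hb
      · simp [hb]
      · exact Nat.pow_pos hb
    exact lt_of_lt_of_le (Nat.mod_lt _ hpos) (Nat.pow_log_le_self b (by assumption))

/-- Goodstein's base-change ("bumping") function: replace the base `b` by `b + 1`
throughout the hereditary base-`b` representation of `m` (with `B b 0 = 0`). -/
def B (b m : ℕ) : ℕ := hsub b (b + 1) m

/-- The Goodstein sequence of `m`: `G 1 m = m`, and `G (k+1) m = B (k+1) (G k m) - 1`
for `k ≥ 1` (truncated subtraction), so the `k`-th term is written in hereditary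
base `k + 1`. -/
def G : ℕ → ℕ → ℕ
  | 0, m => m
  | 1, m => m
  | (k + 2), m => B (k + 2) (G (k + 1) m) - 1

/-- The auxiliary Goodstein-type sequence: `L 1 k = k ^ k` (written in hereditary
base `k`), and `L (n+1) k = B (k+n-1) (L n k) - 1` for `n ≥ 1` (truncated
subtraction), so the `n`-th term is written in hereditary base `k + n - 1`. -/
def L : ℕ → ℕ → ℕ
  | 0, k => k ^ k
  | 1, k => k ^ k
  | (n + 2), k => B (k + n) (L (n + 1) k) - 1

/-- `O b m` is the ordinal obtained by substituting `ω` for the base `b`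
throughout the hereditary base-`b` representation of `m` (with `O b 0 = 0`). -/
noncomputable def O (b : ℕ) (m : ℕ) : Ordinal :=
  if m = 0 then 0
  else
    Ordinal.omega0 ^ O b (Nat.log b m) * ((m / b ^ Nat.log b m : ℕ) : Ordinal)
      + O b (m % b ^ Nat.log b m)
termination_by m
decreasing_by
  · exact Nat.log_lt_self b (by assumption)
  · have hpos : 0 < b ^ Nat.log b m := by
      rcases Nat.eq_zero_or_pos b with hb | hb
      · simp [hb]
      · exact Nat.pow_pos hb
    exact lt_of_lt_of_le (Nat.mod_lt _ hpos) (Nat.pow_log_le_self b (by assumption))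
lemma hsub_zero (b u : ℕ) : hsub b u 0 = 0 := by rw [hsub]; simp

lemma hsub_of_lt {b u m : ℕ} (h : m < b) : hsub b u m = m := by
  rcases Nat.eq_zero_or_pos m with rfl | hm
  · exact hsub_zero b u
  · rw [hsub]
    have hlog : Nat.log b m = 0 := Nat.log_eq_zero_iff.2 (Or.inl h)
    simp [hm.ne', hlog, hsub_zero, Nat.mod_one]

lemma hsub_ge {b u : ℕ} (hb : 2 ≤ b) (hu : b ≤ u) : ∀ m, m ≤ hsub b u m := by
  intro m
  induction m using Nat.strong_induction_on with
  | _ m ih =>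
    rcases lt_or_ge m b with h | h
    · rw [hsub_of_lt h]
    · have hm0 : m ≠ 0 := by omega
      rw [hsub]
      simp only [hm0, if_false]
      set e := Nat.log b m with he
      have he1 : 1 ≤ e := Nat.log_pos (by omega) h
      have helt : e < m := Nat.log_lt_self b hm0
      have hpow : 0 < b ^ e := Nat.pow_pos (by omega)
      have hple : b ^ e ≤ m := Nat.pow_log_le_self b hm0
      have hd : 1 ≤ m / b ^ e := Nat.one_le_div_iff hpow |>.2 hple
      have hre : m % b ^ e < m := lt_of_lt_of_le (Nat.mod_lt _ hpow) hple
      have h1 : e ≤ hsub b u e := ih e helt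
      have h2 : m % b ^ e ≤ hsub b u (m % b ^ e) := ih _ hre
      have h3 : b ^ e ≤ u ^ hsub b u e :=
        le_trans (Nat.pow_le_pow_left hu e) (Nat.pow_le_pow_right (by omega) h1)
      calc m = b ^ e * (m / b ^ e) + m % b ^ e := (Nat.div_add_mod m (b ^ e)).symm
        _ ≤ u ^ hsub b u e * (m / b ^ e) + hsub b u (m % b ^ e) := by
              exact Nat.add_le_add (Nat.mul_le_mul_right _ h3) h2

lemma hsub_gt {b u m : ℕ} (hb : 2 ≤ b) (hu : b < u) (hm : b ≤ m) : m < hsub b u m := by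
  have hm0 : m ≠ 0 := by omega
  rw [hsub]
  simp only [hm0, if_false]
  set e := Nat.log b m with he
  have he1 : 1 ≤ e := Nat.log_pos (by omega) hm
  have hpow : 0 < b ^ e := Nat.pow_pos (by omega)
  have hple : b ^ e ≤ m := Nat.pow_log_le_self b hm0
  have hd : 1 ≤ m / b ^ e := Nat.one_le_div_iff hpow |>.2 hple
  have h1 : e ≤ hsub b u e := hsub_ge hb (le_of_lt hu) e
  have h2 : m % b ^ e ≤ hsub b u (m % b ^ e) := hsub_ge hb (le_of_lt hu) _
  have h3 : b ^ e + 1 ≤ u ^ hsub b u e := by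
    have : b ^ e < u ^ e := Nat.pow_lt_pow_left hu (by omega)
    have := Nat.pow_le_pow_right (show 1 ≤ u by omega) h1
    omega
  have hsplit : m = b ^ e * (m / b ^ e) + m % b ^ e := (Nat.div_add_mod m (b ^ e)).symm
  have : (b ^ e + 1) * (m / b ^ e) ≤ u ^ hsub b u e * (m / b ^ e) :=
    Nat.mul_le_mul_right _ h3
  have hexp : b ^ e * (m / b ^ e) + 1 ≤ (b ^ e + 1) * (m / b ^ e) := by
    rw [Nat.add_mul]; omega
  omega

lemma B_of_lt {b m : ℕ} (h : m < b) : B b m = m := hsub_of_lt h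

lemma B_self {b : ℕ} (hb : 2 ≤ b) : B b b = b + 1 := by
  have hb0 : b ≠ 0 := by omega
  rw [B, hsub]
  have hlog : Nat.log b b = 1 := by
    rw [Nat.log_eq_one_iff']
    exact ⟨le_refl b, by nlinarith⟩
  simp [hb0, hlog, hsub_of_lt (show 1 < b by omega), hsub_zero, Nat.div_self (show 0 < b by omega), pow_one]

lemma B_gt {b m : ℕ} (hb : 2 ≤ b) (hm : b ≤ m) : m < B b m :=
  hsub_gt hb (Nat.lt_succ_self b) hm

lemma G_succ (j m : ℕ) (hj : 1 ≤ j) : G (j + 1) m = B (j + 1) (G j m) - 1 := by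
  obtain ⟨k, rfl⟩ := Nat.exists_eq_add_of_le hj
  rw [Nat.add_comm 1 k]
  rfl

/-- **Corollary 6.1**: let `m ≥ 2` and let `n` be the least natural number
(`n ≥ 1`) with `G n m = 0`. Then `n = 2 * n₁` for some `n₁ ≥ 2`, and
`G k m = n - k` for every `k` with `n₁ ≤ k < n`. -/
theorem goodstein_corollary6_1 (m n : ℕ) (hm : 2 ≤ m) (hn1 : 1 ≤ n) (hn : G n m = 0)
    (hmin : ∀ j : ℕ, 1 ≤ j → G j m = 0 → n ≤ j) :
    ∃ n₁ : ℕ, 2 ≤ n₁ ∧ n = 2 * n₁ ∧ ∀ k : ℕ, n₁ ≤ k → k < n → G k m = n - k := by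
  classical
  have hex : ∃ k, 1 ≤ k ∧ G k m ≤ k := ⟨n, hn1, by omega⟩
  set k₀ := Nat.find hex with hk₀def
  obtain ⟨hk₀1, hk₀le⟩ := Nat.find_spec hex
  rw [← hk₀def] at hk₀1 hk₀le
  have hG1 : G 1 m = m := rfl
  have hk₀2 : 2 ≤ k₀ := by
    rcases Nat.lt_or_ge k₀ 2 with h | h
    · have hk1 : k₀ = 1 := by omega
      rw [hk1, hG1] at hk₀le; omega
    · exact h
  have hbig : ∀ j, 1 ≤ j → j < k₀ → j + 1 ≤ G j m := by
    intro j hj hjlt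
    have := Nat.find_min hex hjlt
    by_contra h
    exact this ⟨hj, by omega⟩
  -- the value at step k₀ - 1 is at least k₀
  have hprev : k₀ ≤ G (k₀ - 1) m := by
    have := hbig (k₀ - 1) (by omega) (by omega)
    omega
  have hstep : G k₀ m = B k₀ (G (k₀ - 1) m) - 1 := by
    have h := G_succ (k₀ - 1) m (by omega)
    rwa [show k₀ - 1 + 1 = k₀ by omega] at h
  have hGk₀ : G k₀ m = k₀ := by
    rcases eq_or_lt_of_le hprev with heq | hlt
    · rw [hstep, ← heq, B_self hk₀2]; omega
    · exfalso
      have hB : G (k₀ - 1) m < B k₀ (G (k₀ - 1) m) := B_gt hk₀2 hprev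
      have : k₀ + 1 ≤ G k₀ m := by rw [hstep]; omega
      omega
  have hdown : ∀ t, t ≤ k₀ → G (k₀ + t) m = k₀ - t := by
    intro t
    induction t with
    | zero => intro _; simpa using hGk₀
    | succ t ih =>
      intro ht
      have h1 := ih (by omega)
      have hs := G_succ (k₀ + t) m (by omega)
      rw [show k₀ + t + 1 = k₀ + (t + 1) by ring] at hs
      rw [hs, h1, B_of_lt (show k₀ - t < k₀ + (t + 1) by omega)]
      omega
  have hzero : G (2 * k₀) m = 0 := by
    have h := hdown k₀ le_rfl
    rw [show k₀ + k₀ = 2 * k₀ by ring] at h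
    omega
  have hle : n ≤ 2 * k₀ := hmin _ (by omega) hzero
  have hpos : ∀ k, 1 ≤ k → k < 2 * k₀ → 0 < G k m := by
    intro k hk hklt
    rcases Nat.lt_or_ge k k₀ with h | h
    · have := hbig k hk h; omega
    · have hd := hdown (k - k₀) (by omega)
      rw [show k₀ + (k - k₀) = k by omega] at hd
      omega
  have hneq : n = 2 * k₀ := by
    by_contra h
    have := hpos n hn1 (by omega)
    omega
  refine ⟨k₀, hk₀2, hneq, ?_⟩
  intro k hk1 hk2
  have hd := hdown (k - k₀) (by omega)
  rw [show k₀ + (k - k₀) = k by omega] at hd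
  omega
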